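/- There exists C > 0 such that for every real σ ≥ 0, integer p ≥ 0, and all functions v ∈ H^{σ+1+p}(T), f ∈ L²(T), one has ‖[H; v]∂_x^p f‖_{H^σ(T)} ≤ C ‖∂_x^p v‖_{H^{σ+1}(T)} ‖f‖_{L²(T)}. -/

import Mathlib

open scoped Real ENNReal

noncomputable section

/-- The Japanese-bracket power `⟨k⟩ˢ = (1 + |k|²)^{s/2}`. -/
def japow (k : ℤ) (s : ℝ) : ℝ := (1 + (k : ℝ) ^ 2) ^ (s / 2)

/-- The squared `Hˢ(𝕋)` norm of a periodic function described by its sequence of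
Fourier coefficients `c`: `‖f‖²_{Hˢ} = 2π·Σ_k ⟨k⟩^{2s}|f^(k)|²`. -/
def hsNormSq (s : ℝ) (c : ℤ → ℂ) : ℝ := 2 * Real.pi * ∑' k : ℤ, japow k (2 * s) * ‖c k‖ ^ 2

/-- The `Hˢ(𝕋)` norm in terms of Fourier coefficients. -/
def hsNorm (s : ℝ) (c : ℤ → ℂ) : ℝ := Real.sqrt (hsNormSq s c)

/-- Membership in the Sobolev space `Hˢ(𝕋)`, in terms of Fourier coefficients. -/
def MemHs (s : ℝ) (c : ℤ → ℂ) : Prop := Summable fun k : ℤ => japow k (2 * s) * ‖c k‖ ^ 2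

/-- The discrete Hilbert transform on the Fourier side: `(H[f])^(k) = -i·sgn(k)·f^(k)`. -/
def hilbC (c : ℤ → ℂ) : ℤ → ℂ := fun k => -Complex.I * (Int.sign k : ℤ) * c k

/-- The `x`-derivative on the Fourier side: `(∂ₓf)^(k) = i·k·f^(k)`. -/
def derC (c : ℤ → ℂ) : ℤ → ℂ := fun k => Complex.I * (k : ℂ) * c k

/-- The pointwise product of two periodic functions on the Fourier side
(discrete convolution of the coefficients). -/
def convC (a b : ℤ → ℂ) : ℤ → ℂ := fun k => ∑' ℓ : ℤ, a (k - ℓ) * b ℓ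

/-- The commutator `[H; v]f = H[v·f] - v·H[f]` on the Fourier side. -/
def commH (v f : ℤ → ℂ) : ℤ → ℂ := fun k => hilbC (convC v f) k - convC v (hilbC f) k

namespace Stmt11Aux

lemma japow_nonneg (k : ℤ) (s : ℝ) : 0 ≤ japow k s := Real.rpow_nonneg (by positivity) _

lemma japow_pos (k : ℤ) (s : ℝ) : 0 < japow k s := Real.rpow_pos_of_pos (by positivity) _

lemma japow_add (k : ℤ) (s t : ℝ) : japow k (s + t) = japow k s * japow k t := by
  unfold japow
  rw [add_div, Real.rpow_add (by positivity)]

lemma japow_two_mul (k : ℤ) (s : ℝ) : japow k (2 * s) = japow k s ^ 2 := by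
  rw [two_mul, japow_add, sq]

lemma japow_zero' (k : ℤ) : japow k 0 = 1 := by simp [japow]

lemma japow_mono {k m : ℤ} {s : ℝ} (hs : 0 ≤ s) (h : k ^ 2 ≤ m ^ 2) :
    japow k s ≤ japow m s := by
  have h' : (k : ℝ) ^ 2 ≤ (m : ℝ) ^ 2 := by exact_mod_cast h
  exact Real.rpow_le_rpow (by positivity) (by linarith) (by positivity)

lemma japow_two_nat (m : ℤ) (p : ℕ) : japow m (2 * p) = (1 + (m : ℝ) ^ 2) ^ p := by
  unfold japow
  rw [show (2 * (p : ℝ)) / 2 = (p : ℝ) by ring, Real.rpow_natCast]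

lemma japow_neg_two (m : ℤ) : japow m (-2) = 1 / (1 + (m : ℝ) ^ 2) := by
  unfold japow
  rw [show (-2 : ℝ) / 2 = -1 by norm_num, Real.rpow_neg_one, one_div]

lemma derC_iter (p : ℕ) (c : ℤ → ℂ) (k : ℤ) :
    derC^[p] c k = (Complex.I * (k : ℂ)) ^ p * c k := by
  induction p generalizing c with
  | zero => simp
  | succ n ih =>
    rw [Function.iterate_succ_apply, ih]
    simp only [derC]
    ring

lemma norm_Imul_pow (m : ℤ) (p : ℕ) : ‖(Complex.I * (m : ℂ)) ^ p‖ = |(m : ℝ)| ^ p := by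
  rw [norm_pow, norm_mul, Complex.norm_I, one_mul, Complex.norm_intCast]

lemma sign_cases (n : ℤ) : n.sign = -1 ∨ n.sign = 0 ∨ n.sign = 1 := by
  rcases lt_trichotomy n 0 with h | h | h
  · exact Or.inl (Int.sign_eq_neg_one_iff_neg.mpr h)
  · subst h; simp
  · exact Or.inr (Or.inr (Int.sign_eq_one_iff_pos.mpr h))

lemma mul_nonpos_of_sign_ne {k ℓ : ℤ} (h : k.sign ≠ ℓ.sign) : k * ℓ ≤ 0 := by
  by_contra hc
  push_neg at hc
  rcases mul_pos_iff.mp hc with ⟨hk, hl⟩ | ⟨hk, hl⟩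
  · exact h ((Int.sign_eq_one_iff_pos.mpr hk).trans (Int.sign_eq_one_iff_pos.mpr hl).symm)
  · exact h ((Int.sign_eq_neg_one_iff_neg.mpr hk).trans
      (Int.sign_eq_neg_one_iff_neg.mpr hl).symm)

lemma sq_le_left_of_sign_ne {k ℓ : ℤ} (h : k.sign ≠ ℓ.sign) : k ^ 2 ≤ (k - ℓ) ^ 2 := by
  nlinarith [mul_nonpos_of_sign_ne h]

lemma sq_le_right_of_sign_ne {k ℓ : ℤ} (h : k.sign ≠ ℓ.sign) : ℓ ^ 2 ≤ (k - ℓ) ^ 2 := by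
  nlinarith [mul_nonpos_of_sign_ne h]

lemma norm_sign_le (n : ℤ) : ‖((n.sign : ℤ) : ℂ)‖ ≤ 1 := by
  rcases sign_cases n with h | h | h <;> rw [h] <;> norm_num

lemma norm_sign_diff_le (k ℓ : ℤ) : ‖((k.sign - ℓ.sign : ℤ) : ℂ)‖ ≤ 2 := by
  rcases sign_cases k with h | h | h <;> rcases sign_cases ℓ with h' | h' | h' <;>
    rw [h, h'] <;> norm_num


lemma two_mul_mul_le_sq_add_sq (a b : ℝ≥0∞) : 2 * (a * b) ≤ a ^ 2 + b ^ 2 := by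
  rcases eq_or_ne a 0 with rfl | ha0
  · simp
  rcases eq_or_ne b 0 with rfl | hb0
  · simp
  rcases eq_or_ne a ⊤ with rfl | hat
  · refine le_trans le_top ?_
    rw [ENNReal.top_pow two_ne_zero]
    simp
  rcases eq_or_ne b ⊤ with rfl | hbt
  · refine le_trans le_top ?_
    rw [ENNReal.top_pow two_ne_zero]
    simp
  lift a to NNReal using hat
  lift b to NNReal using hbt
  rw [← ENNReal.coe_mul, ← ENNReal.coe_pow, ← ENNReal.coe_pow,
    show (2 : ℝ≥0∞) = ((2 : NNReal) : ℝ≥0∞) by norm_cast, ← ENNReal.coe_mul,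
    ← ENNReal.coe_add, ENNReal.coe_le_coe, ← NNReal.coe_le_coe]
  push_cast
  nlinarith [sq_nonneg ((a : ℝ) - (b : ℝ))]

lemma double_factor {ι : Type*} (a b : ι → ℝ≥0∞) :
    ∑' i, ∑' j, a i * b j = (∑' i, a i) * ∑' j, b j := by
  rw [← ENNReal.tsum_mul_right]
  exact tsum_congr fun i => ENNReal.tsum_mul_left

lemma expand_sq {ι : Type*} (z : ι → ℝ≥0∞) : (∑' i, z i) ^ 2 = ∑' i, ∑' j, z i * z j := by
  rw [sq, double_factor]

lemma cs {ι : Type*} (x y : ι → ℝ≥0∞) :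
    (∑' i, x i * y i) ^ 2 ≤ (∑' i, x i ^ 2) * ∑' i, y i ^ 2 := by
  rw [← ENNReal.mul_le_mul_iff_right (two_ne_zero) ENNReal.ofNat_ne_top, expand_sq]
  calc 2 * ∑' i, ∑' j, (x i * y i) * (x j * y j)
      = ∑' i, ∑' j, 2 * ((x i * y j) * (x j * y i)) := by
        rw [← ENNReal.tsum_mul_left]
        exact tsum_congr fun i => by
          rw [← ENNReal.tsum_mul_left]
          exact tsum_congr fun j => by ring
    _ ≤ ∑' i, ∑' j, ((x i * y j) ^ 2 + (x j * y i) ^ 2) :=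
        ENNReal.tsum_le_tsum fun i => ENNReal.tsum_le_tsum fun j =>
          two_mul_mul_le_sq_add_sq _ _
    _ = (∑' i, ∑' j, x i ^ 2 * y j ^ 2) + ∑' i, ∑' j, x j ^ 2 * y i ^ 2 := by
        rw [← ENNReal.tsum_add]
        refine tsum_congr fun i => ?_
        rw [← ENNReal.tsum_add]
        exact tsum_congr fun j => by ring
    _ = 2 * ((∑' i, x i ^ 2) * ∑' i, y i ^ 2) := by
        rw [ENNReal.tsum_comm (f := fun i j => x j ^ 2 * y i ^ 2), double_factor, two_mul]

lemma wcs {ι : Type*} (u b : ι → ℝ≥0∞) :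
    (∑' i, u i * b i) ^ 2 ≤ (∑' i, u i) * ∑' i, u i * b i ^ 2 := by
  have hu : ∀ i, (u i ^ ((2 : ℝ)⁻¹)) ^ 2 = u i := fun i => by
    rw [← ENNReal.rpow_natCast (u i ^ ((2 : ℝ)⁻¹)) 2, ← ENNReal.rpow_mul]
    norm_num
  have h := cs (fun i => u i ^ ((2 : ℝ)⁻¹)) (fun i => u i ^ ((2 : ℝ)⁻¹) * b i)
  simp only [mul_pow, hu] at h
  calc (∑' i, u i * b i) ^ 2
      = (∑' i, u i ^ ((2 : ℝ)⁻¹) * (u i ^ ((2 : ℝ)⁻¹) * b i)) ^ 2 := by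
        congr 1
        exact tsum_congr fun i => by rw [← mul_assoc, ← sq, hu]
    _ ≤ _ := h

lemma young (A B : ℤ → ℝ≥0∞) :
    ∑' k : ℤ, (∑' ℓ : ℤ, A (k - ℓ) * B ℓ) ^ 2 ≤
      (∑' m : ℤ, A m) ^ 2 * ∑' ℓ : ℤ, B ℓ ^ 2 := by
  have hshift : ∀ k : ℤ, ∑' ℓ : ℤ, A (k - ℓ) = ∑' m : ℤ, A m := fun k =>
    (Equiv.subLeft k).tsum_eq A
  have hshift' : ∀ ℓ : ℤ, ∑' k : ℤ, A (k - ℓ) = ∑' m : ℤ, A m := fun ℓ =>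
    (Equiv.subRight ℓ).tsum_eq A
  calc ∑' k : ℤ, (∑' ℓ : ℤ, A (k - ℓ) * B ℓ) ^ 2
      ≤ ∑' k : ℤ, (∑' ℓ : ℤ, A (k - ℓ)) * ∑' ℓ : ℤ, A (k - ℓ) * B ℓ ^ 2 :=
        ENNReal.tsum_le_tsum fun k => wcs _ _
    _ = (∑' m : ℤ, A m) * ∑' k : ℤ, ∑' ℓ : ℤ, A (k - ℓ) * B ℓ ^ 2 := by
        rw [← ENNReal.tsum_mul_left]
        exact tsum_congr fun k => by rw [hshift]
    _ = (∑' m : ℤ, A m) * ∑' ℓ : ℤ, ∑' k : ℤ, A (k - ℓ) * B ℓ ^ 2 := by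
        rw [ENNReal.tsum_comm (f := fun k ℓ => A (k - ℓ) * B ℓ ^ 2)]
    _ = (∑' m : ℤ, A m) * ((∑' m : ℤ, A m) * ∑' ℓ : ℤ, B ℓ ^ 2) := by
        congr 1
        calc ∑' ℓ : ℤ, ∑' k : ℤ, A (k - ℓ) * B ℓ ^ 2
            = ∑' ℓ : ℤ, (∑' m : ℤ, A m) * B ℓ ^ 2 :=
              tsum_congr fun ℓ => by rw [ENNReal.tsum_mul_right, hshift']
          _ = _ := ENNReal.tsum_mul_left
    _ = _ := by ring

lemma norm_commH_le (v g : ℤ → ℂ) (k : ℤ) :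
    ENNReal.ofReal ‖commH v g k‖ ≤
      ∑' ℓ : ℤ, ENNReal.ofReal ‖((k.sign - ℓ.sign : ℤ) : ℂ) * (v (k - ℓ) * g ℓ)‖ := by
  by_cases hs : Summable fun ℓ : ℤ => v (k - ℓ) * g ℓ
  · have hnorm : Summable fun ℓ : ℤ => ‖v (k - ℓ) * g ℓ‖ := summable_norm_iff.mpr hs
    have hd_sum : Summable fun ℓ : ℤ => ((k.sign - ℓ.sign : ℤ) : ℂ) * (v (k - ℓ) * g ℓ) := by
      refine Summable.of_norm_bounded (g := fun ℓ => 2 * ‖v (k - ℓ) * g ℓ‖) (hnorm.mul_left 2)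
        fun ℓ => ?_
      rw [norm_mul]
      exact mul_le_mul_of_nonneg_right (norm_sign_diff_le k ℓ) (norm_nonneg _)
    have hs1 : Summable fun ℓ : ℤ => -Complex.I * ((k.sign : ℤ) : ℂ) * (v (k - ℓ) * g ℓ) :=
      hs.mul_left _
    have hs2 : Summable fun ℓ : ℤ => -Complex.I * ((ℓ.sign : ℤ) : ℂ) * (v (k - ℓ) * g ℓ) := by
      refine Summable.of_norm_bounded (g := fun ℓ => ‖v (k - ℓ) * g ℓ‖) hnorm fun ℓ => ?_
      rw [norm_mul, norm_mul, norm_neg, Complex.norm_I, one_mul]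
      exact mul_le_of_le_one_left (norm_nonneg _) (norm_sign_le ℓ)
    have hcomm : commH v g k =
        -Complex.I * ∑' ℓ : ℤ, ((k.sign - ℓ.sign : ℤ) : ℂ) * (v (k - ℓ) * g ℓ) := by
      have e1 : hilbC (convC v g) k =
          ∑' ℓ : ℤ, -Complex.I * ((k.sign : ℤ) : ℂ) * (v (k - ℓ) * g ℓ) := by
        simp only [hilbC, convC]
        rw [← tsum_mul_left]
      have e2 : convC v (hilbC g) k =
          ∑' ℓ : ℤ, -Complex.I * ((ℓ.sign : ℤ) : ℂ) * (v (k - ℓ) * g ℓ) := by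
        simp only [convC, hilbC]
        exact tsum_congr fun ℓ => by ring
      simp only [commH]
      rw [e1, e2, ← hs1.tsum_sub hs2, ← tsum_mul_left]
      exact tsum_congr fun ℓ => by push_cast; ring
    rw [hcomm, norm_mul, norm_neg, Complex.norm_I, one_mul]
    calc ENNReal.ofReal ‖∑' ℓ : ℤ, ((k.sign - ℓ.sign : ℤ) : ℂ) * (v (k - ℓ) * g ℓ)‖
        ≤ ENNReal.ofReal (∑' ℓ : ℤ, ‖((k.sign - ℓ.sign : ℤ) : ℂ) * (v (k - ℓ) * g ℓ)‖) :=
          ENNReal.ofReal_le_ofReal (norm_tsum_le_tsum_norm (summable_norm_iff.mpr hd_sum))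
      _ = _ := ENNReal.ofReal_tsum_of_nonneg (fun ℓ => norm_nonneg _)
          (summable_norm_iff.mpr hd_sum)
  · have e1 : convC v g k = 0 := tsum_eq_zero_of_not_summable hs
    have e2 : convC v (hilbC g) k = 0 := by
      refine tsum_eq_zero_of_not_summable fun hs2 => hs ?_
      have hu : Summable fun ℓ : ℤ =>
          Complex.I * ((ℓ.sign : ℤ) : ℂ) * (v (k - ℓ) * hilbC g ℓ) := by
        refine Summable.of_norm_bounded (g := fun ℓ => ‖v (k - ℓ) * hilbC g ℓ‖)
          (summable_norm_iff.mpr hs2) fun ℓ => ?_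
        rw [norm_mul, norm_mul, Complex.norm_I, one_mul]
        exact mul_le_of_le_one_left (norm_nonneg _) (norm_sign_le ℓ)
      have hfin : Summable (({0} : Set ℤ).indicator fun ℓ : ℤ => v (k - ℓ) * g ℓ) :=
        summable_of_finite_support
          ((Set.finite_singleton 0).subset Set.support_indicator_subset)
      have hdecomp : (fun ℓ : ℤ => v (k - ℓ) * g ℓ) = fun ℓ =>
          Complex.I * ((ℓ.sign : ℤ) : ℂ) * (v (k - ℓ) * hilbC g ℓ) +
            ({0} : Set ℤ).indicator (fun ℓ : ℤ => v (k - ℓ) * g ℓ) ℓ := by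
        funext ℓ
        by_cases hℓ : ℓ = 0
        · subst hℓ
          simp [hilbC]
        · have hsgn : ℓ.sign = 1 ∨ ℓ.sign = -1 := by
            rcases sign_cases ℓ with h | h | h
            · exact Or.inr h
            · exact absurd (Int.sign_eq_zero_iff_zero.mp h) hℓ
            · exact Or.inl h
          simp only [hilbC]
          rw [Set.indicator_of_notMem (by simpa using hℓ), add_zero]
          rcases hsgn with h | h <;> rw [h] <;> push_cast <;>
            linear_combination (v (k - ℓ) * g ℓ) * Complex.I_mul_I
      rw [hdecomp]
      exact hu.add hfin
    simp only [commH, hilbC]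
    rw [e1, e2]
    simp

lemma real_chain {a a' b c d d' e : ℝ} (ha : 0 ≤ a) (ha' : a ≤ a') (hb0 : 0 ≤ b) (hb2 : b ≤ 2)
    (hc : 0 ≤ c) (hd : 0 ≤ d) (hd' : d ≤ d') (he : 0 ≤ e) :
    a * (b * (c * (d * e))) ≤ 2 * (a' * (d' * c) * e) := by
  have h1 : c * (d * e) ≤ c * (d' * e) :=
    mul_le_mul_of_nonneg_left (mul_le_mul_of_nonneg_right hd' he) hc
  have h2 : b * (c * (d * e)) ≤ 2 * (c * (d' * e)) :=
    mul_le_mul hb2 h1 (mul_nonneg hc (mul_nonneg hd he)) (by norm_num)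
  have h3 : a * (b * (c * (d * e))) ≤ a' * (2 * (c * (d' * e))) :=
    mul_le_mul ha' h2 (mul_nonneg hb0 (mul_nonneg hc (mul_nonneg hd he))) (ha.trans ha')
  calc a * (b * (c * (d * e))) ≤ a' * (2 * (c * (d' * e))) := h3
    _ = 2 * (a' * (d' * c) * e) := by ring

lemma term_bound {σ : ℝ} (hσ : 0 ≤ σ) (p : ℕ) (v f : ℤ → ℂ) (k ℓ : ℤ) :
    ENNReal.ofReal (japow k σ) *
        ENNReal.ofReal ‖((k.sign - ℓ.sign : ℤ) : ℂ) * (v (k - ℓ) * derC^[p] f ℓ)‖ ≤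
      2 * (ENNReal.ofReal (japow (k - ℓ) σ) * ENNReal.ofReal ‖derC^[p] v (k - ℓ)‖ *
        ENNReal.ofReal ‖f ℓ‖) := by
  by_cases hsgn : k.sign = ℓ.sign
  · rw [hsgn]
    simp
  · have hj : japow k σ ≤ japow (k - ℓ) σ := japow_mono hσ (sq_le_left_of_sign_ne hsgn)
    have h2 : ((ℓ : ℝ)) ^ 2 ≤ (((k - ℓ : ℤ) : ℝ)) ^ 2 := by
      exact_mod_cast sq_le_right_of_sign_ne hsgn
    have habs : |(ℓ : ℝ)| ≤ |((k - ℓ : ℤ) : ℝ)| := by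
      rw [← Real.sqrt_sq_eq_abs, ← Real.sqrt_sq_eq_abs]
      exact Real.sqrt_le_sqrt h2
    have hpow : |(ℓ : ℝ)| ^ p ≤ |((k - ℓ : ℤ) : ℝ)| ^ p :=
      pow_le_pow_left₀ (abs_nonneg _) habs p
    rw [← ENNReal.ofReal_mul (japow_nonneg _ _), ← ENNReal.ofReal_mul (japow_nonneg _ _),
      ← ENNReal.ofReal_mul (mul_nonneg (japow_nonneg _ _) (norm_nonneg _)),
      show (2 : ℝ≥0∞) = ENNReal.ofReal 2 by norm_num,
      ← ENNReal.ofReal_mul (by norm_num : (0:ℝ) ≤ 2)]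
    apply ENNReal.ofReal_le_ofReal
    rw [norm_mul, norm_mul, derC_iter, derC_iter, norm_mul, norm_mul, norm_Imul_pow,
      norm_Imul_pow]
    exact real_chain (japow_nonneg _ _) hj (norm_nonneg _) (norm_sign_diff_le k ℓ) (norm_nonneg _)
      (by positivity) hpow (norm_nonneg _)

lemma K_le : ∑' m : ℤ, ENNReal.ofReal (japow m (-2)) ≤ 9 := by
  have hzsum : Summable fun n : ℕ => 1 / (1 + (n : ℝ) ^ 2) := by
    have hg : Summable fun n : ℕ =>
        1 / (n : ℝ) ^ 2 + ({0} : Set ℕ).indicator (fun _ => (1 : ℝ)) n :=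
      hasSum_zeta_two.summable.add (summable_of_finite_support
        ((Set.finite_singleton 0).subset Set.support_indicator_subset))
    refine Summable.of_nonneg_of_le (fun n => by positivity) (fun n => ?_) hg
    rcases Nat.eq_zero_or_pos n with rfl | hn
    · simp
    · have hn1 : (1 : ℝ) ≤ (n : ℝ) := by exact_mod_cast hn
      rw [Set.indicator_of_notMem (by simpa using hn.ne'), add_zero]
      apply one_div_le_one_div_of_le (by positivity)
      nlinarith
  have htsum : ∑' n : ℕ, 1 / (1 + (n : ℝ) ^ 2) ≤ 4 := by
    have hone : ∑' n : ℕ, ({0} : Set ℕ).indicator (fun _ => (1 : ℝ)) n = 1 := by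
      rw [tsum_eq_single 0 (fun b hb => Set.indicator_of_notMem (by simpa using hb) _)]
      simp
    have hfin : Summable (({0} : Set ℕ).indicator (fun _ => (1 : ℝ))) :=
      summable_of_finite_support
        ((Set.finite_singleton 0).subset Set.support_indicator_subset)
    have hle : ∑' n : ℕ, 1 / (1 + (n : ℝ) ^ 2) ≤
        ∑' n : ℕ, (1 / (n : ℝ) ^ 2 + ({0} : Set ℕ).indicator (fun _ => (1 : ℝ)) n) := by
      refine Summable.tsum_le_tsum (fun n => ?_) hzsum (hasSum_zeta_two.summable.add hfin)
      rcases Nat.eq_zero_or_pos n with rfl | hn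
      · simp
      · have hn1 : (1 : ℝ) ≤ (n : ℝ) := by exact_mod_cast hn
        rw [Set.indicator_of_notMem (by simpa using hn.ne'), add_zero]
        apply one_div_le_one_div_of_le (by positivity)
        nlinarith
    rw [hasSum_zeta_two.summable.tsum_add hfin, hasSum_zeta_two.tsum_eq, hone] at hle
    nlinarith [Real.pi_le_four, Real.pi_pos, hle]
  rw [← tsum_nat_add_neg_add_one ENNReal.summable]
  have hterm : ∀ n : ℕ,
      ENNReal.ofReal (japow ((n : ℤ)) (-2)) + ENNReal.ofReal (japow (-((n : ℤ) + 1)) (-2)) ≤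
        2 * ENNReal.ofReal (1 / (1 + (n : ℝ) ^ 2)) := by
    intro n
    have e1 : japow ((n : ℤ)) (-2) = 1 / (1 + (n : ℝ) ^ 2) := by
      rw [japow_neg_two]
      norm_num
    have e2 : japow (-((n : ℤ) + 1)) (-2) ≤ 1 / (1 + (n : ℝ) ^ 2) := by
      rw [japow_neg_two]
      apply one_div_le_one_div_of_le (by positivity)
      push_cast
      have hc : (-((n : ℝ) + 1)) ^ 2 = ((n : ℝ) + 1) ^ 2 := by ring
      rw [hc]
      nlinarith [Nat.cast_nonneg (α := ℝ) n]
    rw [e1, two_mul]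
    exact add_le_add le_rfl (ENNReal.ofReal_le_ofReal e2)
  calc ∑' n : ℕ, (ENNReal.ofReal (japow ((n : ℤ)) (-2)) +
        ENNReal.ofReal (japow (-((n : ℤ) + 1)) (-2)))
      ≤ ∑' n : ℕ, 2 * ENNReal.ofReal (1 / (1 + (n : ℝ) ^ 2)) := ENNReal.tsum_le_tsum hterm
    _ = 2 * ∑' n : ℕ, ENNReal.ofReal (1 / (1 + (n : ℝ) ^ 2)) := ENNReal.tsum_mul_left
    _ = 2 * ENNReal.ofReal (∑' n : ℕ, 1 / (1 + (n : ℝ) ^ 2)) := by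
        rw [ENNReal.ofReal_tsum_of_nonneg (fun n => by positivity) hzsum]
    _ ≤ 2 * ENNReal.ofReal 4 := mul_le_mul_right (ENNReal.ofReal_le_ofReal htsum) 2
    _ ≤ 9 := by
        rw [show ENNReal.ofReal 4 = 4 by norm_num]
        norm_num

end Stmt11Aux

open Stmt11Aux

/-- There is a constant `C > 0` such that for every real `σ ≥ 0`, every
natural `p`, and all `v ∈ H^(σ+1+p)`, `f ∈ L²`:
`‖[H; v]∂ₓ^p f‖_{H^σ} ≤ C * ‖∂ₓ^p v‖_{H^(σ+1)} * ‖f‖_{L²}`. -/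
theorem stmt_11 :
    ∃ C > (0 : ℝ), ∀ (σ : ℝ), 0 ≤ σ → ∀ (p : ℕ) (v f : ℤ → ℂ),
      MemHs (σ + 1 + p) v → MemHs 0 f →
      hsNorm σ (commH v (derC^[p] f)) ≤ C * hsNorm (σ + 1) (derC^[p] v) * hsNorm 0 f := by
  refine ⟨100, by norm_num, ?_⟩
  intro σ hσ p v f hv hf
  have hv' : Summable fun m : ℤ => japow m (2 * (σ + 1 + p)) * ‖v m‖ ^ 2 := hv
  have hf' : Summable fun ℓ : ℤ => japow ℓ (2 * 0) * ‖f ℓ‖ ^ 2 := hf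
  set S : ℝ≥0∞ := ∑' k : ℤ, ENNReal.ofReal (japow k (2 * σ) * ‖commH v (derC^[p] f) k‖ ^ 2)
    with hSdef
  set W : ℝ≥0∞ := ∑' m : ℤ, ENNReal.ofReal (japow m (2 * (σ + 1)) * ‖derC^[p] v m‖ ^ 2)
    with hWdef
  set F : ℝ≥0∞ := ∑' ℓ : ℤ, ENNReal.ofReal (japow ℓ (2 * 0) * ‖f ℓ‖ ^ 2) with hFdef
  have hWterm : ∀ m : ℤ, japow m (2 * (σ + 1)) * ‖derC^[p] v m‖ ^ 2 ≤
      japow m (2 * (σ + 1 + p)) * ‖v m‖ ^ 2 := by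
    intro m
    rw [derC_iter, norm_mul, norm_Imul_pow, mul_pow]
    have h1 : (|(m : ℝ)| ^ p) ^ 2 = ((m : ℝ) ^ 2) ^ p := by
      rw [← pow_mul, mul_comm p 2, pow_mul, sq_abs]
    rw [h1]
    have h2 : ((m : ℝ) ^ 2) ^ p ≤ (1 + (m : ℝ) ^ 2) ^ p := by
      apply pow_le_pow_left₀ (by positivity)
      linarith
    have h3 : japow m (2 * (σ + 1 + p)) = japow m (2 * (σ + 1)) * (1 + (m : ℝ) ^ 2) ^ p := by
      rw [show 2 * (σ + 1 + (p : ℝ)) = 2 * (σ + 1) + 2 * p by ring, japow_add, japow_two_nat]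
    rw [h3]
    calc japow m (2 * (σ + 1)) * (((m : ℝ) ^ 2) ^ p * ‖v m‖ ^ 2)
        ≤ japow m (2 * (σ + 1)) * ((1 + (m : ℝ) ^ 2) ^ p * ‖v m‖ ^ 2) := by
          apply mul_le_mul_of_nonneg_left _ (japow_nonneg _ _)
          exact mul_le_mul_of_nonneg_right h2 (by positivity)
      _ = _ := by ring
  have hWsum : Summable fun m : ℤ => japow m (2 * (σ + 1)) * ‖derC^[p] v m‖ ^ 2 :=
    Summable.of_nonneg_of_le (fun m => mul_nonneg (japow_nonneg _ _) (by positivity)) hWterm hv'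
  have hWne : W ≠ ⊤ := by
    rw [hWdef, ← ENNReal.ofReal_tsum_of_nonneg
      (fun m => mul_nonneg (japow_nonneg _ _) (by positivity)) hWsum]
    exact ENNReal.ofReal_ne_top
  have hFne : F ≠ ⊤ := by
    rw [hFdef, ← ENNReal.ofReal_tsum_of_nonneg
      (fun ℓ => mul_nonneg (japow_nonneg _ _) (by positivity)) hf']
    exact ENNReal.ofReal_ne_top
  set A : ℤ → ℝ≥0∞ := fun m => ENNReal.ofReal (japow m σ) * ENNReal.ofReal ‖derC^[p] v m‖
    with hAdef
  set B : ℤ → ℝ≥0∞ := fun ℓ => ENNReal.ofReal ‖f ℓ‖ with hBdef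
  have hBsq : ∑' ℓ : ℤ, B ℓ ^ 2 = F := by
    rw [hFdef]
    refine tsum_congr fun ℓ => ?_
    simp only [hBdef]
    rw [← ENNReal.ofReal_pow (norm_nonneg _)]
    congr 1
    rw [show (2 : ℝ) * 0 = 0 by ring, japow_zero', one_mul]
  have hW2 : ∑' m : ℤ, (ENNReal.ofReal (japow m (σ + 1)) * ENNReal.ofReal ‖derC^[p] v m‖) ^ 2
      = W := by
    rw [hWdef]
    refine tsum_congr fun m => ?_
    rw [mul_pow, ← ENNReal.ofReal_pow (japow_nonneg _ _), ← ENNReal.ofReal_pow (norm_nonneg _),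
      ← ENNReal.ofReal_mul (pow_nonneg (japow_nonneg _ _) 2), japow_two_mul]
  have hA1 : (∑' m : ℤ, A m) ^ 2 ≤ 9 * W := by
    have hxy : ∀ m : ℤ, A m = ENNReal.ofReal (japow m (-1)) *
        (ENNReal.ofReal (japow m (σ + 1)) * ENNReal.ofReal ‖derC^[p] v m‖) := by
      intro m
      simp only [hAdef]
      have e : japow m σ = japow m (-1) * japow m (σ + 1) := by
        rw [← japow_add]
        norm_num
      rw [e, ENNReal.ofReal_mul (japow_nonneg _ _), mul_assoc]
    calc (∑' m : ℤ, A m) ^ 2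
        = (∑' m : ℤ, ENNReal.ofReal (japow m (-1)) *
            (ENNReal.ofReal (japow m (σ + 1)) * ENNReal.ofReal ‖derC^[p] v m‖)) ^ 2 := by
          rw [tsum_congr hxy]
      _ ≤ (∑' m : ℤ, ENNReal.ofReal (japow m (-1)) ^ 2) *
            ∑' m : ℤ, (ENNReal.ofReal (japow m (σ + 1)) * ENNReal.ofReal ‖derC^[p] v m‖) ^ 2 :=
          cs _ _
      _ ≤ 9 * W := by
          rw [hW2]
          apply mul_le_mul_left
          calc ∑' m : ℤ, ENNReal.ofReal (japow m (-1)) ^ 2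
              = ∑' m : ℤ, ENNReal.ofReal (japow m (-2)) := tsum_congr fun m => by
                rw [← ENNReal.ofReal_pow (japow_nonneg _ _), ← japow_two_mul,
                  show (2 : ℝ) * -1 = -2 by norm_num]
            _ ≤ 9 := K_le
  have hpoint : ∀ k : ℤ, ENNReal.ofReal (japow k (2 * σ) * ‖commH v (derC^[p] f) k‖ ^ 2) ≤
      (2 * ∑' ℓ : ℤ, A (k - ℓ) * B ℓ) ^ 2 := by
    intro k
    have e1 : ENNReal.ofReal (japow k (2 * σ) * ‖commH v (derC^[p] f) k‖ ^ 2) =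
        (ENNReal.ofReal (japow k σ) * ENNReal.ofReal ‖commH v (derC^[p] f) k‖) ^ 2 := by
      rw [mul_pow, ← ENNReal.ofReal_pow (japow_nonneg _ _), ← ENNReal.ofReal_pow (norm_nonneg _),
        ← ENNReal.ofReal_mul (pow_nonneg (japow_nonneg _ _) 2), japow_two_mul]
    rw [e1]
    have hb : ENNReal.ofReal (japow k σ) * ENNReal.ofReal ‖commH v (derC^[p] f) k‖ ≤
        2 * ∑' ℓ : ℤ, A (k - ℓ) * B ℓ := by
      calc ENNReal.ofReal (japow k σ) * ENNReal.ofReal ‖commH v (derC^[p] f) k‖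
          ≤ ENNReal.ofReal (japow k σ) * ∑' ℓ : ℤ,
              ENNReal.ofReal ‖((k.sign - ℓ.sign : ℤ) : ℂ) * (v (k - ℓ) * derC^[p] f ℓ)‖ :=
            mul_le_mul_right (norm_commH_le v (derC^[p] f) k) _
        _ = ∑' ℓ : ℤ, ENNReal.ofReal (japow k σ) *
              ENNReal.ofReal ‖((k.sign - ℓ.sign : ℤ) : ℂ) * (v (k - ℓ) * derC^[p] f ℓ)‖ :=
            ENNReal.tsum_mul_left.symm
        _ ≤ ∑' ℓ : ℤ, 2 * (A (k - ℓ) * B ℓ) := ENNReal.tsum_le_tsum fun ℓ => by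
              simp only [hAdef, hBdef]
              exact term_bound hσ p v f k ℓ
        _ = 2 * ∑' ℓ : ℤ, A (k - ℓ) * B ℓ := ENNReal.tsum_mul_left
    rw [sq, sq]
    exact mul_le_mul' hb hb
  have hS36 : S ≤ 36 * (W * F) := by
    rw [hSdef]
    calc ∑' k : ℤ, ENNReal.ofReal (japow k (2 * σ) * ‖commH v (derC^[p] f) k‖ ^ 2)
        ≤ ∑' k : ℤ, (2 * ∑' ℓ : ℤ, A (k - ℓ) * B ℓ) ^ 2 := ENNReal.tsum_le_tsum hpoint
      _ = 4 * ∑' k : ℤ, (∑' ℓ : ℤ, A (k - ℓ) * B ℓ) ^ 2 := by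
          rw [← ENNReal.tsum_mul_left]
          refine tsum_congr fun k => ?_
          rw [mul_pow]
          norm_num
      _ ≤ 4 * ((∑' m : ℤ, A m) ^ 2 * ∑' ℓ : ℤ, B ℓ ^ 2) := mul_le_mul_right (young A B) 4
      _ ≤ 4 * ((9 * W) * F) := by
          rw [hBsq]
          exact mul_le_mul_right (mul_le_mul_left hA1 F) 4
      _ = 36 * (W * F) := by ring
  have hRne : (36 : ℝ≥0∞) * (W * F) ≠ ⊤ :=
    ENNReal.mul_ne_top (by norm_num) (ENNReal.mul_ne_top hWne hFne)
  have hSne : S ≠ ⊤ := ne_top_of_le_ne_top hRne hS36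
  have hSr : hsNormSq σ (commH v (derC^[p] f)) = 2 * Real.pi * S.toReal := by
    rw [hsNormSq, hSdef, ENNReal.tsum_toReal_eq (fun k => ENNReal.ofReal_ne_top)]
    congr 1
    exact tsum_congr fun k =>
      (ENNReal.toReal_ofReal (mul_nonneg (japow_nonneg _ _) (by positivity))).symm
  have hWr : hsNormSq (σ + 1) (derC^[p] v) = 2 * Real.pi * W.toReal := by
    rw [hsNormSq, hWdef, ENNReal.tsum_toReal_eq (fun m => ENNReal.ofReal_ne_top)]
    congr 1
    exact tsum_congr fun m =>
      (ENNReal.toReal_ofReal (mul_nonneg (japow_nonneg _ _) (by positivity))).symm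
  have hFr : hsNormSq 0 f = 2 * Real.pi * F.toReal := by
    rw [hsNormSq, hFdef, ENNReal.tsum_toReal_eq (fun ℓ => ENNReal.ofReal_ne_top)]
    congr 1
    exact tsum_congr fun ℓ =>
      (ENNReal.toReal_ofReal (mul_nonneg (japow_nonneg _ _) (by positivity))).symm
  have htr : S.toReal ≤ 36 * (W.toReal * F.toReal) := by
    have h := ENNReal.toReal_mono hRne hS36
    rwa [ENNReal.toReal_mul, ENNReal.toReal_mul,
      show ((36 : ℝ≥0∞)).toReal = 36 by norm_num] at h
  rw [hsNorm, hsNorm, hsNorm, hSr, hWr, hFr]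
  have hW0 : 0 ≤ W.toReal := ENNReal.toReal_nonneg
  have hF0 : 0 ≤ F.toReal := ENNReal.toReal_nonneg
  have hpi : (3 : ℝ) ≤ Real.pi := Real.pi_gt_three.le
  have hstep : 2 * Real.pi * S.toReal ≤
      (100 * Real.sqrt (2 * Real.pi * W.toReal) * Real.sqrt (2 * Real.pi * F.toReal)) ^ 2 := by
    rw [mul_pow, mul_pow, Real.sq_sqrt (by positivity), Real.sq_sqrt (by positivity)]
    have h1 : 2 * Real.pi * S.toReal ≤ 2 * Real.pi * (36 * (W.toReal * F.toReal)) :=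
      mul_le_mul_of_nonneg_left htr (by positivity)
    have h2 : (0 : ℝ) ≤ W.toReal * F.toReal := mul_nonneg hW0 hF0
    nlinarith [Real.pi_pos, mul_nonneg (mul_nonneg h2 Real.pi_pos.le) Real.pi_pos.le]
  calc Real.sqrt (2 * Real.pi * S.toReal)
      ≤ Real.sqrt ((100 * Real.sqrt (2 * Real.pi * W.toReal) *
          Real.sqrt (2 * Real.pi * F.toReal)) ^ 2) := Real.sqrt_le_sqrt hstep
    _ = 100 * Real.sqrt (2 * Real.pi * W.toReal) * Real.sqrt (2 * Real.pi * F.toReal) :=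
      Real.sqrt_sq (by positivity)
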